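/- (Lemma 3.1) Fix τ > 0, ε ≥ 0 and points xᵏ, xᵏ⁺¹ ∈ ℝⁿ, ȳᵏ, yᵏ⁺¹, ȳᵏ⁺¹ ∈ ℝᵐ such that: (i) (1/τ)S(ȳᵏ − yᵏ⁺¹) + A xᵏ ∈ ∂_{ε/2} g(yᵏ⁺¹); and (iii) for all y ∈ ℝᵐ, g(y) − ⟨Axᵏ⁺¹, y⟩ + (1/(2τ))‖y − ȳᵏ‖²_S ≥ g(ȳᵏ⁺¹) − ⟨Axᵏ⁺¹, ȳᵏ⁺¹⟩ + (1/(2τ))‖ȳᵏ⁺¹ − ȳᵏ‖²_S − ε/2. Then for every y ∈ ℝᵐ: L(xᵏ⁺¹, y) − L(xᵏ⁺¹, yᵏ⁺¹) ≤ (1/(2τ))(‖y − ȳᵏ‖²_S − ‖y − ȳᵏ⁺¹‖²_S) + √(ε/τ)·‖y − ȳᵏ⁺¹‖_S + (τ/2)‖A(xᵏ⁺¹ − xᵏ)‖²_{S⁻¹} + 2ε − (1/(2τ))‖ȳᵏ − yᵏ⁺¹‖²_S. -/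

import Mathlib

open Matrix Finset

/-- squared M-norm: ⟨x, M x⟩ -/
noncomputable def sqnorm {d : ℕ} (M : Matrix (Fin d) (Fin d) ℝ) (x : Fin d → ℝ) : ℝ :=
  x ⬝ᵥ M.mulVec x

/-- M-norm: √⟨x, M x⟩ -/
noncomputable def mnorm {d : ℕ} (M : Matrix (Fin d) (Fin d) ℝ) (x : Fin d → ℝ) : ℝ :=
  Real.sqrt (x ⬝ᵥ M.mulVec x)

/-- The Lagrangian L(x,y) = f(x) + ⟨Ax, y⟩ − g(y). -/
noncomputable def Lag {n m : ℕ} (f : (Fin n → ℝ) → ℝ) (g : (Fin m → ℝ) → ℝ)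
    (A : Matrix (Fin m) (Fin n) ℝ) (x : Fin n → ℝ) (y : Fin m → ℝ) : ℝ :=
  f x + A.mulVec x ⬝ᵥ y - g y

section helpers

variable {d : ℕ} (S : Matrix (Fin d) (Fin d) ℝ)

lemma dual_sqnorm_nonneg (hS : S.PosDef) (x : Fin d → ℝ) : 0 ≤ sqnorm S x := by
  have := hS.posSemidef.dotProduct_mulVec_nonneg x
  simpa [sqnorm] using this

lemma dual_bil_symm (hS : Sᵀ = S) (u v : Fin d → ℝ) :
    u ⬝ᵥ S.mulVec v = v ⬝ᵥ S.mulVec u := by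
  rw [dotProduct_mulVec, ← Matrix.mulVec_transpose, hS, dotProduct_comm]

lemma dual_sqnorm_combo (θ : ℝ) (u v : Fin d → ℝ) :
    sqnorm S (θ • u + (1 - θ) • v)
      = θ * sqnorm S u + (1 - θ) * sqnorm S v - θ * (1 - θ) * sqnorm S (u - v) := by
  simp only [sqnorm, Matrix.mulVec_add, Matrix.mulVec_smul, Matrix.mulVec_sub,
    dotProduct_add, dotProduct_smul, dotProduct_sub, add_dotProduct, sub_dotProduct,
    smul_dotProduct, smul_eq_mul]
  ring

lemma dual_three_point (hS : Sᵀ = S) (u v w : Fin d → ℝ) :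
    (u - v) ⬝ᵥ S.mulVec (w - v)
      = (sqnorm S (w - v) + sqnorm S (u - v) - sqnorm S (u - w)) / 2 := by
  have h1 := dual_bil_symm S hS u v
  have h2 := dual_bil_symm S hS u w
  have h3 := dual_bil_symm S hS v w
  simp only [sqnorm, Matrix.mulVec_sub, dotProduct_sub, sub_dotProduct] at *
  linarith

end helpers

/-- Lemma 3.1. -/
theorem dual_update_ineq {n m : ℕ}
    (f : (Fin n → ℝ) → ℝ) (g : (Fin m → ℝ) → ℝ)
    (hf : ConvexOn ℝ Set.univ f) (hg : ConvexOn ℝ Set.univ g)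
    (A : Matrix (Fin m) (Fin n) ℝ)
    (S : Matrix (Fin m) (Fin m) ℝ) (hS : S.PosDef)
    (τ : ℝ) (hτ : 0 < τ) (ε : ℝ) (hε : 0 ≤ ε)
    (xk xk1 : Fin n → ℝ) (ybark yk1 ybark1 : Fin m → ℝ)
    (hi : ∀ y, g y ≥ g yk1 +
        ((1 / τ) • S.mulVec (ybark - yk1) + A.mulVec xk) ⬝ᵥ (y - yk1) - ε / 2)
    (hiii : ∀ y, g y - A.mulVec xk1 ⬝ᵥ y + (1 / (2 * τ)) * sqnorm S (y - ybark)
        ≥ g ybark1 - A.mulVec xk1 ⬝ᵥ ybark1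
          + (1 / (2 * τ)) * sqnorm S (ybark1 - ybark) - ε / 2) :
    ∀ y, Lag f g A xk1 y - Lag f g A xk1 yk1
      ≤ (1 / (2 * τ)) * (sqnorm S (y - ybark) - sqnorm S (y - ybark1))
        + Real.sqrt (ε / τ) * mnorm S (y - ybark1)
        + (τ / 2) * sqnorm S⁻¹ (A.mulVec (xk1 - xk))
        + 2 * ε - (1 / (2 * τ)) * sqnorm S (ybark - yk1) := by
  have hT : Sᵀ = S := by have := hS.1.eq; simpa using this
  have hSS : S * S⁻¹ = 1 := Matrix.mul_nonsing_inv S hS.det_pos.ne'.isUnit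
  intro y
  set c : Fin m → ℝ := A.mulVec xk1 with hcdef
  set p : Fin m → ℝ := A.mulVec (xk1 - xk) with hpdef
  set v : Fin m → ℝ := ybark1 - yk1 with hvdef
  set q1 : ℝ := sqnorm S (y - ybark) with hq1
  set q2 : ℝ := sqnorm S (y - ybark1) with hq2
  set q3 : ℝ := sqnorm S (ybark1 - ybark) with hq3
  set q4 : ℝ := sqnorm S (ybark - yk1) with hq4
  set q5 : ℝ := sqnorm S v with hq5
  set b2 : ℝ := sqnorm S⁻¹ p with hb2
  set r : ℝ := mnorm S (y - ybark1) with hr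
  have hq2_nonneg : 0 ≤ q2 := dual_sqnorm_nonneg S hS _
  have hq5_nonneg : 0 ≤ q5 := dual_sqnorm_nonneg S hS _
  have hr_nonneg : 0 ≤ r := Real.sqrt_nonneg _
  have hr_sq : r * r = q2 := by
    rw [hr, hq2]
    unfold mnorm sqnorm
    exact Real.mul_self_sqrt (by simpa [sqnorm] using dual_sqnorm_nonneg S hS (y - ybark1))
  -- strong convexity consequence of hiii
  have SC : ∀ θ : ℝ, 0 ≤ θ → θ ≤ 1 →
      θ * ((g y - c ⬝ᵥ y + (1/(2*τ))*q1) - (g ybark1 - c ⬝ᵥ ybark1 + (1/(2*τ))*q3))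
        ≥ θ*(1-θ)/(2*τ) * q2 - ε/2 := by
    intro θ hθ0 hθ1
    set w : Fin m → ℝ := θ • y + (1-θ) • ybark1 with hwdef
    have hgw : g w ≤ θ * g y + (1-θ) * g ybark1 :=
      hg.2 (Set.mem_univ y) (Set.mem_univ ybark1) hθ0 (by linarith) (by ring)
    have hlin : c ⬝ᵥ w = θ * (c ⬝ᵥ y) + (1-θ) * (c ⬝ᵥ ybark1) := by
      simp [hwdef, dotProduct_add, dotProduct_smul, smul_eq_mul]
    have hwe : w - ybark = θ • (y - ybark) + (1-θ) • (ybark1 - ybark) := by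
      rw [hwdef]; ext i; simp; ring
    have hsub : (y - ybark) - (ybark1 - ybark) = y - ybark1 := sub_sub_sub_cancel_right _ _ _
    have hquad : sqnorm S (w - ybark) = θ * q1 + (1-θ) * q3 - θ*(1-θ)*q2 := by
      rw [hwe, dual_sqnorm_combo, hsub, hq1, hq3, hq2]
    have h := hiii w
    rw [hquad, hlin] at h
    have key : θ * ((g y - c ⬝ᵥ y + (1/(2*τ))*q1) - (g ybark1 - c ⬝ᵥ ybark1 + (1/(2*τ))*q3))
        - (θ*(1-θ)/(2*τ) * q2 - ε/2)
        = (θ * g y + (1-θ) * g ybark1 - g w)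
          + ((g w - (θ * (c ⬝ᵥ y) + (1-θ) * (c ⬝ᵥ ybark1))
              + (1/(2*τ))*(θ*q1+(1-θ)*q3-θ*(1-θ)*q2))
             - (g ybark1 - c ⬝ᵥ ybark1 + (1/(2*τ))*q3 - ε/2)) := by ring
    have h2 : 0 ≤ θ * g y + (1-θ) * g ybark1 - g w := by linarith
    have h3 : 0 ≤ (g w - (θ * (c ⬝ᵥ y) + (1-θ) * (c ⬝ᵥ ybark1))
              + (1/(2*τ))*(θ*q1+(1-θ)*q3-θ*(1-θ)*q2))
             - (g ybark1 - c ⬝ᵥ ybark1 + (1/(2*τ))*q3 - ε/2) := by linarith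
    linarith [key, h2, h3]
  -- key lower bound (B)
  have hB : (1/(2*τ))*q2 - Real.sqrt (ε/τ) * r - ε/2
      ≤ (g y - c ⬝ᵥ y + (1/(2*τ))*q1) - (g ybark1 - c ⬝ᵥ ybark1 + (1/(2*τ))*q3) := by
    set D : ℝ := (g y - c ⬝ᵥ y + (1/(2*τ))*q1) - (g ybark1 - c ⬝ᵥ ybark1 + (1/(2*τ))*q3) with hD
    rcases eq_or_lt_of_le hε with hε0 | hεpos
    · -- ε = 0
      rw [← hε0]
      simp only [zero_div, Real.sqrt_zero, zero_mul, mul_zero, sub_zero]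
      refine le_of_forall_pos_le_add ?_
      intro cδ hcδ
      rcases eq_or_lt_of_le hq2_nonneg with hq20 | hq2p
      · have h1 := SC 1 zero_le_one le_rfl
        have hz : (1:ℝ)/(2*τ)*q2 = 0 := by rw [← hq20]; ring
        have hz2 : (1:ℝ)*(1-1)/(2*τ)*q2 = 0 := by ring
        linarith
      · set θ : ℝ := min 1 (2*τ*cδ/q2) with hθdef
        have hθpos : 0 < θ := lt_min one_pos (by positivity)
        have hθ1 : θ ≤ 1 := min_le_left _ _
        have h1 := SC θ hθpos.le hθ1
        rw [← hε0] at h1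
        have h2 : (1-θ)/(2*τ)*q2 ≤ D := by
          have hh : θ * ((1-θ)/(2*τ)*q2) ≤ θ * D := by
            have hz2 : θ * ((1-θ)/(2*τ)*q2) = θ*(1-θ)/(2*τ)*q2 - 0/2 := by ring
            linarith
          exact le_of_mul_le_mul_left hh hθpos
        have hθb : θ ≤ 2*τ*cδ/q2 := min_le_right _ _
        have h4 : θ*q2 ≤ 2*τ*cδ := (le_div_iff₀ hq2p).mp hθb
        have h3 : θ/(2*τ)*q2 ≤ cδ := by
          have e : θ/(2*τ)*q2 = (θ*q2)/(2*τ) := by ring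
          rw [e, div_le_iff₀ (by positivity : (0:ℝ) < 2*τ)]
          linarith
        have e2 : (1-θ)/(2*τ)*q2 = 1/(2*τ)*q2 - θ/(2*τ)*q2 := by ring
        linarith
    · -- ε > 0
      set s : ℝ := Real.sqrt (τ*ε) with hsdef
      have hspos : 0 < s := Real.sqrt_pos.mpr (by positivity)
      have hts : s = τ * Real.sqrt (ε/τ) := by
        rw [hsdef, show τ*ε = (ε/τ)*τ^2 by field_simp,
          Real.sqrt_mul (by positivity), Real.sqrt_sq hτ.le]
        ring
      have hse : s * Real.sqrt (ε/τ) = ε := by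
        rw [hsdef, ← Real.sqrt_mul (by positivity),
          show τ*ε*(ε/τ) = ε^2 by field_simp, Real.sqrt_sq hε]
      rcases le_or_gt r s with hrs | hrs
      · have h1 := SC 1 zero_le_one le_rfl
        have h2 : -(ε/2) ≤ D := by
          have hz : (1:ℝ)*(1-1)/(2*τ)*q2 = 0 := by ring
          linarith
        have h3 : (1/(2*τ))*q2 ≤ Real.sqrt (ε/τ) * r := by
          have hsq : 0 ≤ Real.sqrt (ε/τ) := Real.sqrt_nonneg _
          have hb : q2 ≤ r * (τ * Real.sqrt (ε/τ)) := by
            have h5 : r * r ≤ r * s := mul_le_mul_of_nonneg_left hrs hr_nonneg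
            rw [hts] at h5; linarith [hr_sq]
          have h6 : 1/(2*τ)*q2 ≤ 1/(2*τ)*(r * (τ * Real.sqrt (ε/τ))) :=
            mul_le_mul_of_nonneg_left hb (by positivity)
          have e : 1/(2*τ)*(r * (τ * Real.sqrt (ε/τ))) = Real.sqrt (ε/τ)*r/2 := by
            field_simp
          have h7 : 0 ≤ Real.sqrt (ε/τ) * r := mul_nonneg hsq hr_nonneg
          linarith
        linarith
      · set θ : ℝ := s/r with hθdef
        have hrpos : 0 < r := lt_trans hspos hrs
        have hθpos : 0 < θ := by positivity
        have hθ1 : θ ≤ 1 := by rw [hθdef, div_le_one hrpos]; exact hrs.le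
        have h1 := SC θ hθpos.le hθ1
        have h2 : (1-θ)/(2*τ)*q2 - ε/(2*θ) ≤ D := by
          have hh : θ * ((1-θ)/(2*τ)*q2 - ε/(2*θ)) ≤ θ * D := by
            have hθε : θ * (ε/(2*θ)) = ε/2 := by field_simp
            have hz2 : θ * ((1-θ)/(2*τ)*q2 - ε/(2*θ))
                = θ*(1-θ)/(2*τ)*q2 - θ*(ε/(2*θ)) := by ring
            linarith
          exact le_of_mul_le_mul_left hh hθpos
        have e5 : θ * q2 = s * r := by
          rw [hθdef, ← hr_sq]
          field_simp
        have e6 : ε/(2*θ) = Real.sqrt (ε/τ) * r / 2 := by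
          rw [hθdef, show 2*(s/r) = (2*s)/r by ring, div_div_eq_mul_div,
            div_eq_div_iff (by positivity : (0:ℝ) < 2*s).ne' (two_ne_zero)]
          linear_combination (-2*r) * hse
        have e7 : θ/(2*τ)*q2 = Real.sqrt (ε/τ) * r / 2 := by
          calc θ/(2*τ)*q2 = (θ*q2)/(2*τ) := by ring
            _ = s*r/(2*τ) := by rw [e5]
            _ = Real.sqrt (ε/τ) * r / 2 := by rw [hts]; field_simp
        have : (1-θ)/(2*τ)*q2 = (1/(2*τ))*q2 - θ/(2*τ)*q2 := by ring
        linarith [h2, e6, e7, this.ge, this.le]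
  -- instantiate hi at ybark1
  have hA : g ybark1 ≥ g yk1 + ((1/τ) * ((ybark - yk1) ⬝ᵥ S.mulVec v) + A.mulVec xk ⬝ᵥ v) - ε/2 := by
    have h := hi ybark1
    rw [← hvdef] at h
    have : ((1 / τ) • S.mulVec (ybark - yk1) + A.mulVec xk) ⬝ᵥ v
        = (1/τ) * ((ybark - yk1) ⬝ᵥ S.mulVec v) + A.mulVec xk ⬝ᵥ v := by
      rw [add_dotProduct, smul_dotProduct, smul_eq_mul,
        dotProduct_comm (S.mulVec (ybark - yk1)) v, dual_bil_symm S hT v (ybark - yk1)]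
    rw [this] at h
    exact h
  -- three point identity
  have hI1 : (ybark - yk1) ⬝ᵥ S.mulVec v = (q5 + q4 - q3)/2 := by
    have hq5' : q5 = sqnorm S (ybark1 - yk1) := by rw [hq5, hvdef]
    have hflip : sqnorm S (ybark - ybark1) = q3 := by
      rw [hq3]
      simp only [sqnorm, Matrix.mulVec_sub, dotProduct_sub, sub_dotProduct]
      ring
    rw [hvdef, dual_three_point S hT ybark yk1 ybark1, hflip, hq4, hq5']
  -- Young's inequality
  have hY : p ⬝ᵥ v ≤ (τ/2)*b2 + (1/(2*τ))*q5 := by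
    have h0 : 0 ≤ sqnorm S (τ • (S⁻¹).mulVec p - v) := dual_sqnorm_nonneg S hS _
    have e1 : S.mulVec ((S⁻¹).mulVec p) = p := by
      rw [Matrix.mulVec_mulVec, hSS, Matrix.one_mulVec]
    have e2 : ((S⁻¹).mulVec p) ⬝ᵥ S.mulVec v = p ⬝ᵥ v := by
      rw [dual_bil_symm S hT, e1, dotProduct_comm]
    have e3 : ((S⁻¹).mulVec p) ⬝ᵥ p = b2 := by
      rw [dotProduct_comm, hb2, sqnorm]
    have hexp : sqnorm S (τ • (S⁻¹).mulVec p - v) = τ^2*b2 - 2*τ*(p ⬝ᵥ v) + q5 := by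
      simp only [sqnorm, Matrix.mulVec_sub, Matrix.mulVec_smul, dotProduct_sub,
        sub_dotProduct, smul_dotProduct, dotProduct_smul, smul_eq_mul, e1, e2]
      rw [show v ⬝ᵥ p = p ⬝ᵥ v from dotProduct_comm _ _, e3, hq5, sqnorm]
      ring
    rw [hexp] at h0
    have h2 : 2*τ*(p ⬝ᵥ v) ≤ 2*τ*((τ/2)*b2 + (1/(2*τ))*q5) := by
      have : 2*τ*((τ/2)*b2 + (1/(2*τ))*q5) = τ^2*b2 + q5 := by field_simp
      rw [this]; linarith
    exact le_of_mul_le_mul_left h2 (by positivity)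
  -- linear pieces
  have hCv : c ⬝ᵥ ybark1 - c ⬝ᵥ yk1 = c ⬝ᵥ v := by
    rw [hvdef, dotProduct_sub]
  have hP : c ⬝ᵥ v - A.mulVec xk ⬝ᵥ v = p ⬝ᵥ v := by
    rw [hpdef, Matrix.mulVec_sub, sub_dotProduct, hcdef]
  have hLag : Lag f g A xk1 y - Lag f g A xk1 yk1
      = (c ⬝ᵥ y - c ⬝ᵥ yk1) - g y + g yk1 := by
    simp [Lag, hcdef]; ring
  rw [hI1] at hA
  have hA2 : g ybark1 ≥ g yk1 + ((1/(2*τ))*(q5+q4-q3) + A.mulVec xk ⬝ᵥ v) - ε/2 := by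
    have e : 1/τ*((q5+q4-q3)/2) = 1/(2*τ)*(q5+q4-q3) := by
      field_simp
    linarith [hA, e.le, e.ge]
  rw [hLag]
  linarith [hB, hA2, hY, hCv.le, hCv.ge, hP.le, hP.ge, hε]
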